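/- Let H be a complex Hilbert space and P, Q orthogonal projections on H with ranges M and N satisfying the braid relation (2P−1)(2Q−1)(2P−1) = (2Q−1)(2P−1)(2Q−1). Then the sequence (PQ)ⁿ converges in operator norm to the orthogonal projection P_{M∩N} onto M ∩ N, and H = (M ∩ N) ⊕ (M⊥ + N⊥). -/

import Mathlib

open Filter Topology

/-- If the self-adjoint unitaries `2P - 1` and `2Q - 1` (for orthogonal projections
`P, Q` with ranges `M, N`) satisfy the braid relation, then `(PQ)ⁿ` converges in operator
norm to the orthogonal projection onto `M ∩ N`, and `H = (M ∩ N) ⊕ (M⊥ + N⊥)`. -/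
theorem stmt_13 {H : Type*} [NormedAddCommGroup H] [InnerProductSpace ℂ H] [CompleteSpace H]
    (M N : Submodule ℂ H) (P Q : H →L[ℂ] H)
    (hP : ∀ x : H, P x ∈ M ∧ x - P x ∈ Mᗮ)
    (hQ : ∀ x : H, Q x ∈ N ∧ x - Q x ∈ Nᗮ)
    (hbraid : ((2 : ℂ) • P - 1) * ((2 : ℂ) • Q - 1) * ((2 : ℂ) • P - 1) =
      ((2 : ℂ) • Q - 1) * ((2 : ℂ) • P - 1) * ((2 : ℂ) • Q - 1)) :
    (∀ R : H →L[ℂ] H, (∀ x : H, R x ∈ M ⊓ N ∧ x - R x ∈ (M ⊓ N)ᗮ) →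
      Tendsto (fun n : ℕ => (P * Q) ^ n) atTop (𝓝 R)) ∧
    IsCompl (M ⊓ N) (Mᗮ ⊔ Nᗮ) := by
  have hPr : ∀ x : H, P x ∈ M := fun x => (hP x).1
  have hQr : ∀ x : H, Q x ∈ N := fun x => (hQ x).1
  have hPfix : ∀ m : H, m ∈ M → P m = m := by
    intro m hm
    have h3 : (inner ℂ (m - P m) (m - P m) : ℂ) = 0 :=
      (Submodule.mem_orthogonal M _).1 (hP m).2 _ (sub_mem hm (hPr m))
    have h4 := inner_self_eq_zero.mp h3
    have := sub_eq_zero.mp h4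
    exact this.symm
  have hQfix : ∀ m : H, m ∈ N → Q m = m := by
    intro m hm
    have h3 : (inner ℂ (m - Q m) (m - Q m) : ℂ) = 0 :=
      (Submodule.mem_orthogonal N _).1 (hQ m).2 _ (sub_mem hm (hQr m))
    exact (sub_eq_zero.mp (inner_self_eq_zero.mp h3)).symm
  have hP2 : P * P = P := by
    ext x; exact hPfix _ (hPr x)
  have hQ2 : Q * Q = Q := by
    ext x; exact hQfix _ (hQr x)
  have hPsa : ∀ x y : H, (inner ℂ (P x) y : ℂ) = inner ℂ x (P y) := by
    intro x y
    have h1 : (inner ℂ (P x) (y - P y) : ℂ) = 0 :=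
      (Submodule.mem_orthogonal M _).1 (hP y).2 _ (hPr x)
    have h2 : (inner ℂ (P y) (x - P x) : ℂ) = 0 :=
      (Submodule.mem_orthogonal M _).1 (hP x).2 _ (hPr y)
    have h2' : (inner ℂ (x - P x) (P y) : ℂ) = 0 := by
      rw [← inner_conj_symm, h2, map_zero]
    rw [inner_sub_right] at h1
    rw [inner_sub_left] at h2'
    rw [sub_eq_zero.mp h1, sub_eq_zero.mp h2']
  have hQsa : ∀ x y : H, (inner ℂ (Q x) y : ℂ) = inner ℂ x (Q y) := by
    intro x y
    have h1 : (inner ℂ (Q x) (y - Q y) : ℂ) = 0 :=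
      (Submodule.mem_orthogonal N _).1 (hQ y).2 _ (hQr x)
    have h2 : (inner ℂ (Q y) (x - Q x) : ℂ) = 0 :=
      (Submodule.mem_orthogonal N _).1 (hQ x).2 _ (hQr y)
    have h2' : (inner ℂ (x - Q x) (Q y) : ℂ) = 0 := by
      rw [← inner_conj_symm, h2, map_zero]
    rw [inner_sub_right] at h1
    rw [inner_sub_left] at h2'
    rw [sub_eq_zero.mp h1, sub_eq_zero.mp h2']
  -- braid consequence
  have hb : P*(Q*P) - Q*(P*Q) = (4⁻¹:ℂ) • P - (4⁻¹:ℂ) • Q := by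
    have hL : ((2 : ℂ) • P - 1) * ((2 : ℂ) • Q - 1) * ((2 : ℂ) • P - 1)
        = (8:ℂ) • (P*(Q*P)) - (4:ℂ) • (P*Q) - (4:ℂ) • (Q*P) + (2:ℂ) • Q - 1 := by
      simp only [sub_mul, mul_sub, smul_mul_assoc, mul_smul_comm, smul_smul, one_mul, mul_one,
        mul_assoc, hP2, hQ2]
      module
    have hR : ((2 : ℂ) • Q - 1) * ((2 : ℂ) • P - 1) * ((2 : ℂ) • Q - 1)
        = (8:ℂ) • (Q*(P*Q)) - (4:ℂ) • (Q*P) - (4:ℂ) • (P*Q) + (2:ℂ) • P - 1 := by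
      simp only [sub_mul, mul_sub, smul_mul_assoc, mul_smul_comm, smul_smul, one_mul, mul_one,
        mul_assoc, hP2, hQ2]
      module
    have h0 : ((8:ℂ) • (P*(Q*P)) - (4:ℂ) • (P*Q) - (4:ℂ) • (Q*P) + (2:ℂ) • Q - 1)
        - ((8:ℂ) • (Q*(P*Q)) - (4:ℂ) • (Q*P) - (4:ℂ) • (P*Q) + (2:ℂ) • P - 1) = 0 := by
      rw [← hL, ← hR, hbraid, sub_self]
    have h1 : P*(Q*P) - Q*(P*Q) - ((4⁻¹:ℂ) • P - (4⁻¹:ℂ) • Q)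
        = (8⁻¹:ℂ) • (((8:ℂ) • (P*(Q*P)) - (4:ℂ) • (P*Q) - (4:ℂ) • (Q*P) + (2:ℂ) • Q - 1)
        - ((8:ℂ) • (Q*(P*Q)) - (4:ℂ) • (Q*P) - (4:ℂ) • (P*Q) + (2:ℂ) • P - 1)) := by
      module
    rw [h0, smul_zero] at h1
    exact sub_eq_zero.mp h1
  set E : H →L[ℂ] H := (3:ℂ)⁻¹ • ((4:ℂ) • (Q*(P*Q)) - Q) with hEdef
  have hE' : E = (3:ℂ)⁻¹ • ((4:ℂ) • (P*(Q*P)) - P) := by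
    have h0 : P*(Q*P) - Q*(P*Q) - ((4⁻¹:ℂ) • P - (4⁻¹:ℂ) • Q) = 0 := sub_eq_zero_of_eq hb
    have h1 : (3:ℂ)⁻¹ • ((4:ℂ) • (Q*(P*Q)) - Q) - (3:ℂ)⁻¹ • ((4:ℂ) • (P*(Q*P)) - P)
        = (-(4:ℂ)*3⁻¹) • (P*(Q*P) - Q*(P*Q) - ((4⁻¹:ℂ) • P - (4⁻¹:ℂ) • Q)) := by
      module
    rw [h0, smul_zero] at h1
    rw [hEdef]
    exact sub_eq_zero.mp h1
  have hQE : Q * E = E := by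
    rw [hEdef, mul_smul_comm, mul_sub, mul_smul_comm, ← mul_assoc, hQ2]
  have hPE : P * E = E := by
    rw [hE', mul_smul_comm, mul_sub, mul_smul_comm, ← mul_assoc, hP2]
  have hEQ : E * Q = E := by
    rw [hEdef, smul_mul_assoc, sub_mul, smul_mul_assoc, mul_assoc, mul_assoc, hQ2]
  have hEapp : ∀ x : H, E x = (3:ℂ)⁻¹ • ((4:ℂ) • Q (P (Q x)) - Q x) := by
    intro x
    rw [hEdef]
    simp [ContinuousLinearMap.mul_apply]
  have hEy : ∀ y : H, y ∈ M ⊓ N → E y = y := by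
    intro y hy
    obtain ⟨hyM, hyN⟩ := Submodule.mem_inf.mp hy
    rw [hEapp, hQfix y hyN, hPfix y hyM, hQfix y hyN]
    module
  have hErange : ∀ x : H, E x ∈ M ⊓ N := by
    intro x
    refine Submodule.mem_inf.mpr ⟨?_, ?_⟩
    · have h1 : P (E x) = E x := by
        rw [← ContinuousLinearMap.mul_apply, hPE]
      rw [← h1]; exact hPr _
    · have h1 : Q (E x) = E x := by
        rw [← ContinuousLinearMap.mul_apply, hQE]
      rw [← h1]; exact hQr _
  have hEsa : ∀ x y : H, (inner ℂ (E x) y : ℂ) = inner ℂ x (E y) := by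
    intro x y
    have hBsa : ∀ a b : H, (inner ℂ (Q (P (Q a))) b : ℂ) = inner ℂ a (Q (P (Q b))) := by
      intro a b; rw [hQsa, hPsa, hQsa]
    rw [hEapp, hEapp, inner_smul_left, inner_smul_right, inner_sub_left, inner_sub_right,
      inner_smul_left, inner_smul_right, hBsa, hQsa]
    simp only [Complex.conj_ofNat, map_inv₀]
  -- recursion
  have hBE : Q*(P*Q) - E = (4⁻¹:ℂ) • (Q - E) := by
    rw [hEdef]; module
  have hPQE : P * Q * E = E := by rw [mul_assoc, hQE, hPE]
  have hmid : Q * (P * (Q - E)) = (4⁻¹:ℂ) • (Q - E) := by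
    rw [mul_sub P Q E, hPE, mul_sub Q (P*Q) E, hQE]
    exact hBE
  have hrec : ∀ n : ℕ, (P*Q)^(n+1) - E = (4⁻¹:ℂ)^n • (P * (Q - E)) := by
    intro n
    induction n with
    | zero =>
      simp only [zero_add, pow_one, pow_zero, one_smul]
      rw [mul_sub P Q E, hPE]
    | succ n ih =>
      have h1 : (P*Q)^(n+1+1) - E = (P*Q) * ((P*Q)^(n+1) - E) := by
        rw [mul_sub, hPQE, ← pow_succ']
      rw [h1, ih, mul_smul_comm, mul_assoc, hmid, mul_smul_comm, smul_smul, ← pow_succ]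
  have hconv : Tendsto (fun n : ℕ => (P*Q)^n) atTop (𝓝 E) := by
    have h1 : Tendsto (fun n : ℕ => ‖(P*Q)^(n+1) - E‖) atTop (𝓝 0) := by
      simp only [hrec, norm_smul, norm_pow]
      have h4 : ‖(4⁻¹:ℂ)‖ < 1 := by
        rw [norm_inv]
        simp
        norm_num
      have := (tendsto_pow_atTop_nhds_zero_of_lt_one (norm_nonneg _) h4).mul_const ‖P*(Q-E)‖
      simpa using this
    have h2 : Tendsto (fun n : ℕ => (P*Q)^(n+1) - E) atTop (𝓝 0) :=
      tendsto_zero_iff_norm_tendsto_zero.mpr h1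
    have h3 : Tendsto (fun n : ℕ => (P*Q)^(n+1)) atTop (𝓝 E) := by
      have := h2.add_const E
      simpa using this
    exact (tendsto_add_atTop_iff_nat 1).mp h3
  constructor
  · intro R hR
    have hRE : R = E := by
      ext x
      have hmem1 : R x - E x ∈ M ⊓ N := sub_mem (hR x).1 (hErange x)
      have hperp : x - E x ∈ (M ⊓ N)ᗮ := by
        rw [Submodule.mem_orthogonal]
        intro y hy
        have h1 : (inner ℂ (E y) x : ℂ) = inner ℂ y (E x) := hEsa y x
        rw [hEy y hy] at h1
        rw [inner_sub_right, ← h1, sub_self]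
      have hmem2 : R x - E x ∈ (M ⊓ N)ᗮ := by
        have h5 : R x - E x = (x - E x) - (x - R x) := by abel
        rw [h5]; exact sub_mem hperp (hR x).2
      have h0 : (inner ℂ (R x - E x) (R x - E x) : ℂ) = 0 :=
        (Submodule.mem_orthogonal _ _).1 hmem2 _ hmem1
      exact sub_eq_zero.mp (inner_self_eq_zero.mp h0)
    rw [hRE]; exact hconv
  · constructor
    · rw [Submodule.disjoint_def]
      intro x hx1 hx2
      obtain ⟨hxM, hxN⟩ := Submodule.mem_inf.mp hx1
      obtain ⟨u, hu, v, hv, huv⟩ := Submodule.mem_sup.mp hx2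
      have h1 : (inner ℂ x u : ℂ) = 0 := (Submodule.mem_orthogonal M u).1 hu x hxM
      have h2 : (inner ℂ x v : ℂ) = 0 := (Submodule.mem_orthogonal N v).1 hv x hxN
      have h3 : (inner ℂ x x : ℂ) = 0 := by
        nth_rewrite 2 [← huv]
        rw [inner_add_right, h1, h2, add_zero]
      exact inner_self_eq_zero.mp h3
    · rw [codisjoint_iff, eq_top_iff]
      intro x _
      have hx1 : E x ∈ M ⊓ N := hErange x
      have hx2 : x - E x ∈ Mᗮ ⊔ Nᗮ := by
        set w := Q x - P (Q x) with hw
        have hwM : w ∈ Mᗮ := (hP (Q x)).2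
        have hdecomp : x - E x
            = ((3:ℂ)⁻¹ * 4) • w + ((x - Q x) - ((3:ℂ)⁻¹ * 4) • (w - Q w)) := by
          have hQw : Q w = Q x - Q (P (Q x)) := by
            rw [hw, map_sub, hQfix _ (hQr x)]
          rw [hEapp, hQw, hw]
          module
        rw [hdecomp]
        exact Submodule.add_mem_sup (Submodule.smul_mem _ _ hwM)
          (sub_mem (hQ x).2 (Submodule.smul_mem _ _ (hQ w).2))
      have h6 : x = E x + (x - E x) := by abel
      rw [h6]
      exact Submodule.add_mem_sup hx1 hx2
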